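/- Under the PolyCD algorithm with one-dimensional gradient steps on a polytope S = conv{v^1,…,v^M} with diameter D, for f convex and L-smooth on S, the outer iterates satisfy f(x^t) - f* ≤ max{f(x^1) - f*, 16MLD²}/t for all t ≥ 1. -/

import Mathlib

open scoped RealInnerProductSpace

section Aux

variable {E : Type*} [NormedAddCommGroup E] [InnerProductSpace ℝ E] [CompleteSpace E]

/-- derivative of a function along a line, via its gradient -/
lemma line_hasDerivAt' {f : E → ℝ} {gy : E} (a u : E) (s : ℝ)
    (h : HasGradientAt f gy (a + s • u)) :
    HasDerivAt (fun r : ℝ => f (a + r • u)) ⟪gy, u⟫ s := by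
  have hl : HasDerivAt (fun r : ℝ => a + r • u) u s := by
    simpa using ((hasDerivAt_id s).smul_const u).const_add a
  have := (h.hasFDerivAt.comp_hasDerivAt s hl)
  simpa [InnerProductSpace.toDual_apply_apply, Function.comp_def] using this

/-- gradient inequality for convex functions -/
lemma convex_grad_le' {S : Set E} {f : E → ℝ} (hf : ConvexOn ℝ S f)
    {a b : E} (ha : a ∈ S) (hb : b ∈ S) {ga : E} (hg : HasGradientAt f ga a) :
    ⟪ga, b - a⟫ ≤ f b - f a := by
  set φ : ℝ → ℝ := fun r => f (a + r • (b - a)) with hφ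
  have hd : HasDerivAt φ ⟪ga, b - a⟫ 0 := by
    have := line_hasDerivAt' a (b - a) 0 (by simpa using hg)
    simpa using this
  have hslope : ∀ s ∈ Set.Ioc (0:ℝ) 1, (φ s - φ 0) / s ≤ f b - f a := by
    intro s hs
    have h1 : φ s ≤ (1 - s) * f a + s * f b := by
      have := hf.2 ha hb (by linarith [hs.1, hs.2] : (0:ℝ) ≤ 1 - s) hs.1.le (by ring)
      have heq : a + s • (b - a) = (1 - s) • a + s • b := by module
      simpa [hφ, heq] using this
    have h0 : φ 0 = f a := by simp [hφ]
    rw [div_le_iff₀ hs.1]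
    nlinarith [hs.1]
  have htend : Filter.Tendsto (fun s => (φ s - φ 0) / s) (nhdsWithin 0 (Set.Ioi 0))
      (nhds ⟪ga, b - a⟫) := by
    have := hasDerivAt_iff_tendsto_slope.1 hd
    have h2 := this.mono_left
      (nhdsWithin_mono 0 (by intro y hy; exact ne_of_gt hy : Set.Ioi (0:ℝ) ⊆ {0}ᶜ))
    apply h2.congr'
    filter_upwards [self_mem_nhdsWithin] with s hs
    simp [slope_def_field, div_eq_inv_mul]
  refine le_of_tendsto htend ?_
  filter_upwards [Ioc_mem_nhdsGT_of_mem (by norm_num : (0:ℝ) ∈ Set.Ico (0:ℝ) 1)] with s hs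
  exact hslope s hs

/-- descent lemma for functions with Lipschitz gradient on a convex set -/
lemma descent_lemma' {S : Set E} (hS : Convex ℝ S) {f : E → ℝ} {g : E → E} {L : ℝ}
    (hgrad : ∀ y ∈ S, HasGradientAt f (g y) y)
    (hlip : ∀ a ∈ S, ∀ b ∈ S, ‖g a - g b‖ ≤ L * ‖a - b‖)
    {a b : E} (ha : a ∈ S) (hb : b ∈ S) :
    f b ≤ f a + ⟪g a, b - a⟫ + L / 2 * ‖b - a‖ ^ 2 := by
  set u := b - a with hu
  have hmem : ∀ r ∈ Set.Icc (0:ℝ) 1, a + r • u ∈ S := by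
    intro r hr
    have : a + r • u = (1 - r) • a + r • b := by rw [hu]; module
    rw [this]
    exact hS ha hb (by linarith [hr.1, hr.2]) hr.1 (by ring)
  set χ : ℝ → ℝ := fun r => f (a + r • u) - r * ⟪g a, u⟫ - L / 2 * r ^ 2 * ‖u‖ ^ 2 with hχ
  have hder : ∀ r ∈ Set.Icc (0:ℝ) 1,
      HasDerivAt χ (⟪g (a + r • u), u⟫ - ⟪g a, u⟫ - L * r * ‖u‖ ^ 2) r := by
    intro r hr
    have h1 : HasDerivAt (fun r : ℝ => f (a + r • u)) ⟪g (a + r • u), u⟫ r :=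
      line_hasDerivAt' a u r (hgrad _ (hmem r hr))
    have h2 : HasDerivAt (fun r : ℝ => r * ⟪g a, u⟫) ⟪g a, u⟫ r := by
      simpa using (hasDerivAt_id r).mul_const ⟪g a, u⟫
    have h3 : HasDerivAt (fun r : ℝ => L / 2 * r ^ 2 * ‖u‖ ^ 2) (L * r * ‖u‖ ^ 2) r := by
      have hp : HasDerivAt (fun r : ℝ => r ^ 2) (2 * r) r := by
        simpa using hasDerivAt_pow 2 r
      have := (hp.const_mul (L / 2)).mul_const (‖u‖ ^ 2)
      exact this.congr_deriv (by ring)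
    rw [hχ]; exact (h1.sub h2).sub h3
  have hanti : AntitoneOn χ (Set.Icc (0:ℝ) 1) := by
    apply antitoneOn_of_deriv_nonpos (convex_Icc 0 1)
    · intro r hr
      exact (hder r hr).continuousAt.continuousWithinAt
    · intro r hr
      rw [interior_Icc] at hr
      exact (hder r (Set.mem_Icc_of_Ioo hr)).differentiableAt.differentiableWithinAt
    · intro r hr
      rw [interior_Icc] at hr
      rw [(hder r (Set.mem_Icc_of_Ioo hr)).deriv]
      have hinner : ⟪g (a + r • u) - g a, u⟫ ≤ L * r * ‖u‖ ^ 2 := by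
        calc ⟪g (a + r • u) - g a, u⟫ ≤ ‖g (a + r • u) - g a‖ * ‖u‖ := real_inner_le_norm _ _
          _ ≤ (L * ‖(a + r • u) - a‖) * ‖u‖ := by
              apply mul_le_mul_of_nonneg_right _ (norm_nonneg u)
              simpa using hlip _ (hmem r (Set.mem_Icc_of_Ioo hr)) a ha
          _ = L * r * ‖u‖ ^ 2 := by
              rw [add_sub_cancel_left, norm_smul, Real.norm_eq_abs, abs_of_nonneg hr.1.le]
              ring
      rw [inner_sub_left] at hinner
      linarith
  have h01 := hanti (by norm_num : (0:ℝ) ∈ Set.Icc (0:ℝ) 1)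
    (by norm_num : (1:ℝ) ∈ Set.Icc (0:ℝ) 1) zero_le_one
  simp only [hχ] at h01
  simp only [zero_smul, add_zero, one_smul, zero_pow, one_pow] at h01
  have hab : a + u = b := by rw [hu]; abel
  rw [hab] at h01
  nlinarith [h01]

end Aux

/-- if a is an argmin of the quadratic surrogate on [0,1] then its value is ≤ -(L a²/2) w2 -/
lemma argmin_quad' {c w2 L a : ℝ} (hL : 0 < L) (hw : 0 ≤ w2) (ha : a ∈ Set.Icc (0:ℝ) 1)
    (hq : ∀ β ∈ Set.Icc (0:ℝ) 1, a * c + L * a ^ 2 / 2 * w2 ≤ β * c + L * β ^ 2 / 2 * w2) :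
    a * c + L * a ^ 2 * w2 ≤ 0 := by
  obtain ⟨ha0, ha1⟩ := ha
  rcases le_or_gt 0 c with hc | hc
  · have h0 := hq 0 (by norm_num)
    simp at h0
    nlinarith [mul_nonneg ha0 hc, mul_nonneg (mul_nonneg (sq_nonneg a) hL.le) hw]
  · rcases le_or_gt (L * w2) (-c) with hr | hr
    · have h1 : a ^ 2 ≤ a := by nlinarith
      nlinarith [mul_nonneg ha0 hw, mul_nonneg (mul_nonneg ha0 hw) hL.le]
    · have hw2 : 0 < w2 := by nlinarith
      have hP : 0 < L * w2 := by positivity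
      set r : ℝ := -c / (L * w2) with hrdef
      have hr0 : 0 ≤ r := div_nonneg (by linarith) hP.le
      have hr1 : r ≤ 1 := by rw [div_le_one hP]; linarith
      have hβ := hq r ⟨hr0, hr1⟩
      have hrc : r * (L * w2) = -c := div_mul_cancel₀ _ hP.ne'
      have key : (L * w2 * a + c) ^ 2 ≤ 0 := by nlinarith [hβ, hrc]
      have hz : L * w2 * a + c = 0 := by nlinarith [sq_nonneg (L * w2 * a + c)]
      nlinarith [hz]

set_option maxHeartbeats 2000000 in
theorem stmt13 {d : ℕ} (M : ℕ) (hM : 1 ≤ M)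
    (v : ℕ → EuclideanSpace ℝ (Fin d))
    (S : Set (EuclideanSpace ℝ (Fin d)))
    (hSdef : S = convexHull ℝ (v '' Set.Icc 1 M))
    (D L : ℝ) (hL : 0 < L) (hD : ∀ a ∈ S, ∀ b ∈ S, ‖a - b‖ ≤ D)
    (f : EuclideanSpace ℝ (Fin d) → ℝ)
    (g : EuclideanSpace ℝ (Fin d) → EuclideanSpace ℝ (Fin d))
    (hconv : ConvexOn ℝ S f)
    (hgrad : ∀ y ∈ S, HasGradientAt f (g y) y)
    (hlip : ∀ a ∈ S, ∀ b ∈ S, ‖g a - g b‖ ≤ L * ‖a - b‖)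
    (xstar : EuclideanSpace ℝ (Fin d)) (hxs : xstar ∈ S)
    (hmin : ∀ y ∈ S, f xstar ≤ f y)
    (x : ℕ → ℕ → EuclideanSpace ℝ (Fin d)) (hx00 : x 0 0 ∈ S)
    (α : ℕ → ℕ → ℝ)
    (hcycle : ∀ t, x (t + 1) 0 = x t M)
    (hstep : ∀ t, ∀ i, 1 ≤ i → i ≤ M →
      α t i ∈ Set.Icc (0 : ℝ) 1 ∧
      x t i = x t (i - 1) + α t i • (v i - x t (i - 1)) ∧
      ∀ β ∈ Set.Icc (0 : ℝ) 1,
        α t i * ⟪g (x t (i - 1)), v i - x t (i - 1)⟫ +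
          L * (α t i) ^ 2 / 2 * ‖v i - x t (i - 1)‖ ^ 2 ≤
        β * ⟪g (x t (i - 1)), v i - x t (i - 1)⟫ +
          L * β ^ 2 / 2 * ‖v i - x t (i - 1)‖ ^ 2) :
    ∀ t : ℕ, 1 ≤ t →
      f (x t 0) - f xstar ≤
        max (f (x 1 0) - f xstar) (16 * M * L * D ^ 2) / (t : ℝ) := by
  have hSconv : Convex ℝ S := by rw [hSdef]; exact convex_convexHull ℝ _
  have hvS : ∀ i, 1 ≤ i → i ≤ M → v i ∈ S := by
    intro i h1 h2
    rw [hSdef]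
    exact subset_convexHull ℝ _ ⟨i, ⟨h1, h2⟩, rfl⟩
  have hD0 : 0 ≤ D := le_trans (norm_nonneg (x 0 0 - x 0 0)) (hD _ hx00 _ hx00)
  -- all iterates are in S
  have hmemS : ∀ t, x t 0 ∈ S → ∀ i, i ≤ M → x t i ∈ S := by
    intro t h0 i
    induction i with
    | zero => intro _; exact h0
    | succ n ih =>
      intro hle
      obtain ⟨hα, hxeq, -⟩ := hstep t (n+1) (by omega) hle
      have hxn : x t n ∈ S := ih (by omega)
      have hv : v (n+1) ∈ S := hvS _ (by omega) hle
      have hcomb := hSconv hxn hv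
        (by linarith only [hα.2] : (0:ℝ) ≤ 1 - α t (n+1)) hα.1 (by ring)
      have heq : x t (n+1) = (1 - α t (n+1)) • x t n + α t (n+1) • v (n+1) := by
        rw [hxeq]; simp only [Nat.add_sub_cancel]; module
      rw [heq]; exact hcomb
  have hx0 : ∀ t, x t 0 ∈ S := by
    intro t; induction t with
    | zero => exact hx00
    | succ n ih => rw [hcycle n]; exact hmemS n ih M le_rfl
  have hxS : ∀ t i, i ≤ M → x t i ∈ S := fun t => hmemS t (hx0 t)
  -- per-step descent facts
  have step : ∀ t i, 1 ≤ i → i ≤ M →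
      f (x t i) + L / 2 * ‖x t i - x t (i-1)‖ ^ 2 ≤ f (x t (i-1)) ∧
      ∀ β ∈ Set.Icc (0:ℝ) 1,
        f (x t i) ≤ f (x t (i-1)) + β * ⟪g (x t (i-1)), v i - x t (i-1)⟫
          + L * β ^ 2 / 2 * D ^ 2 := by
    intro t i h1 h2
    obtain ⟨hα, hxeq, hopt⟩ := hstep t i h1 h2
    have hyS : x t (i-1) ∈ S := hxS t (i-1) (by omega)
    have hxiS : x t i ∈ S := hxS t i h2
    have hdes := descent_lemma' hSconv hgrad hlip hyS hxiS
    have hdiff : x t i - x t (i-1) = α t i • (v i - x t (i-1)) := by rw [hxeq]; abel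
    have hin : ⟪g (x t (i-1)), x t i - x t (i-1)⟫
        = α t i * ⟪g (x t (i-1)), v i - x t (i-1)⟫ := by
      rw [hdiff, real_inner_smul_right]
    have hnor : ‖x t i - x t (i-1)‖ ^ 2 = α t i ^ 2 * ‖v i - x t (i-1)‖ ^ 2 := by
      rw [hdiff, norm_smul, mul_pow, Real.norm_eq_abs, sq_abs]
    have hquad := argmin_quad' hL (sq_nonneg ‖v i - x t (i-1)‖) hα hopt
    have hwD : ‖v i - x t (i-1)‖ ≤ D := hD _ (hvS i h1 h2) _ hyS
    have hwD2 : ‖v i - x t (i-1)‖ ^ 2 ≤ D ^ 2 := by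
      have hn := norm_nonneg (v i - x t (i-1))
      nlinarith only [hn, hwD]
    rw [hin, hnor] at hdes
    constructor
    · rw [hnor]
      linarith only [hdes, hquad]
    · intro β hβ
      have hob := hopt β hβ
      have hmul : L * β ^ 2 / 2 * ‖v i - x t (i-1)‖ ^ 2 ≤ L * β ^ 2 / 2 * D ^ 2 :=
        mul_le_mul_of_nonneg_left hwD2 (by positivity)
      linarith only [hdes, hob, hmul]
  -- telescoped decrease
  have chainA : ∀ t j k, j ≤ k → k ≤ M →
      f (x t k) + L / 2 * ∑ l ∈ Finset.Icc (j+1) k, ‖x t l - x t (l-1)‖ ^ 2 ≤ f (x t j) := by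
    intro t j k hjk
    induction k, hjk using Nat.le_induction with
    | base =>
      intro _
      rw [Finset.Icc_eq_empty (by omega)]
      simp
    | succ k hjk ih =>
      intro hkM
      have h1 := (step t (k+1) (by omega) hkM).1
      rw [Finset.sum_Icc_succ_top (by omega : j + 1 ≤ k + 1)]
      have h2 := ih (by omega)
      simp only [Nat.add_sub_cancel] at h1
      simp only [Nat.add_sub_cancel]
      linarith only [h1, h2]
  -- telescoped movement
  have chainB : ∀ t j k, j ≤ k → k ≤ M →
      ‖x t j - x t k‖ ≤ ∑ l ∈ Finset.Icc (j+1) k, ‖x t l - x t (l-1)‖ := by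
    intro t j k hjk
    induction k, hjk using Nat.le_induction with
    | base =>
      intro _
      rw [Finset.Icc_eq_empty (by omega)]
      simp
    | succ k hjk ih =>
      intro hkM
      rw [Finset.sum_Icc_succ_top (by omega : j + 1 ≤ k + 1)]
      have h2 := ih (by omega)
      have htri : ‖x t j - x t (k+1)‖ ≤ ‖x t j - x t k‖ + ‖x t k - x t (k+1)‖ :=
        norm_sub_le_norm_sub_add_norm_sub _ _ _
      have hrev : ‖x t k - x t (k+1)‖ = ‖x t (k+1) - x t k‖ := norm_sub_rev _ _
      simp only [Nat.add_sub_cancel]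
      linarith only [h2, htri, hrev]
  -- nonneg sums of squares
  have hsumnn : ∀ t j k, (0:ℝ) ≤ L / 2 * ∑ l ∈ Finset.Icc (j+1) k, ‖x t l - x t (l-1)‖ ^ 2 :=
    fun t j k => mul_nonneg (by positivity) (Finset.sum_nonneg (fun _ _ => sq_nonneg _))
  -- the per-cycle inequality
  have cycle : ∀ t, (f (x t M) - f xstar) ^ 2
      ≤ 8 * M * L * D ^ 2 * (f (x t 0) - f (x t M)) := by
    intro t
    have hzS : x t M ∈ S := hxS t M le_rfl
    have hΔtot : 0 ≤ f (x t 0) - f (x t M) := by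
      have h := chainA t 0 M (by omega) le_rfl
      linarith only [h, hsumnn t 0 M]
    have hh'0 : 0 ≤ f (x t M) - f xstar := sub_nonneg.2 (hmin _ hzS)
    rcases eq_or_lt_of_le hh'0 with heq | hpos
    · rw [← heq]
      have h8 : (0:ℝ) ≤ 8 * M * L * D ^ 2 := by positivity
      have hprod := mul_nonneg h8 hΔtot
      simpa using hprod
    by_cases hDz : D = 0
    · exfalso
      have h1 : ‖x t M - xstar‖ ≤ 0 := hDz ▸ hD _ hzS _ hxs
      have h2 : x t M = xstar := by
        rw [← sub_eq_zero]
        exact norm_le_zero_iff.mp h1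
      rw [h2] at hpos
      simp at hpos
    have hDpos : 0 < D := lt_of_le_of_ne hD0 (Ne.symm hDz)
    -- find a good vertex for the gradient at the start of the cycle
    have hx0S : x t 0 ∈ S := hx0 t
    have hlinconv : ConvexOn ℝ S (fun p => ⟪g (x t 0), x t 0 - p⟫) := by
      refine ⟨hSconv, ?_⟩
      intro p hp q hq a b ha hb hab
      apply le_of_eq
      simp only [smul_eq_mul]
      rw [inner_sub_right, inner_add_right, real_inner_smul_right, real_inner_smul_right,
        inner_sub_right, inner_sub_right]
      have hb1 : b = 1 - a := by linarith only [hab]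
      rw [hb1]; ring
    have hts : v '' Set.Icc 1 M ⊆ S := by
      rw [hSdef]; exact subset_convexHull ℝ _
    have hxsh : xstar ∈ convexHull ℝ (v '' Set.Icc 1 M) := by rw [← hSdef]; exact hxs
    obtain ⟨w', hw'mem, hge⟩ := hlinconv.exists_ge_of_mem_convexHull hts hxsh
    obtain ⟨i, hiIcc, rfl⟩ := hw'mem
    have hi1 : 1 ≤ i := hiIcc.1
    have hiM : i ≤ M := hiIcc.2
    have hge' : ⟪g (x t 0), x t 0 - xstar⟫ ≤ ⟪g (x t 0), x t 0 - v i⟫ := hge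
    -- gap bound at x t 0
    have hgz := convex_grad_le' hconv hx0S hxs (hgrad _ hx0S)
    have hgood : f (x t 0) - f xstar ≤ ⟪g (x t 0), x t 0 - v i⟫ := by
      have hflip : ⟪g (x t 0), x t 0 - xstar⟫ = - ⟪g (x t 0), xstar - x t 0⟫ := by
        rw [show x t 0 - xstar = -(xstar - x t 0) by abel, inner_neg_right]
      linarith only [hge', hgz, hflip.le, hflip.ge]
    set y := x t (i-1) with hydef
    have hyS : y ∈ S := hxS t (i-1) (by omega)
    have hApre := chainA t 0 (i-1) (by omega) (by omega)
    have hApost := chainA t (i-1) M (by omega) le_rfl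
    have hAi := chainA t i M hiM le_rfl
    have hBpre := chainB t 0 (i-1) (by omega) (by omega)
    have hΔpre0 : 0 ≤ f (x t 0) - f y := by linarith only [hApre, hsumnn t 0 (i-1)]
    have hΔpost0 : 0 ≤ f y - f (x t M) := by linarith only [hApost, hsumnn t (i-1) M]
    have hfzfi : f (x t M) ≤ f (x t i) := by linarith only [hAi, hsumnn t i M]
    -- movement bound
    have hcard : ((Finset.Icc 1 (i-1)).card : ℝ) ≤ (M : ℝ) := by
      rw [Nat.card_Icc]
      exact_mod_cast (by omega : i - 1 + 1 - 1 ≤ M)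
    have hCS := sq_sum_le_card_mul_sum_sq (s := Finset.Icc 1 (i-1))
      (f := fun l => ‖x t l - x t (l-1)‖)
    have hsum2 : L * ∑ l ∈ Finset.Icc 1 (i-1), ‖x t l - x t (l-1)‖ ^ 2
        ≤ 2 * (f (x t 0) - f y) := by linarith only [hApre]
    have hmv : L * ‖x t 0 - y‖ ^ 2 ≤ (M:ℝ) * (2 * (f (x t 0) - f y)) := by
      have e1 : ‖x t 0 - y‖ ^ 2 ≤ (∑ l ∈ Finset.Icc 1 (i-1), ‖x t l - x t (l-1)‖) ^ 2 :=
        pow_le_pow_left₀ (norm_nonneg _) hBpre 2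
      have e2 : ‖x t 0 - y‖ ^ 2
          ≤ (M:ℝ) * ∑ l ∈ Finset.Icc 1 (i-1), ‖x t l - x t (l-1)‖ ^ 2 := by
        calc ‖x t 0 - y‖ ^ 2 ≤ _ := e1
          _ ≤ ((Finset.Icc 1 (i-1)).card : ℝ)
              * ∑ l ∈ Finset.Icc 1 (i-1), ‖x t l - x t (l-1)‖ ^ 2 := hCS
          _ ≤ (M:ℝ) * ∑ l ∈ Finset.Icc 1 (i-1), ‖x t l - x t (l-1)‖ ^ 2 :=
            mul_le_mul_of_nonneg_right hcard
              (Finset.sum_nonneg (fun _ _ => sq_nonneg _))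
      have e3 := mul_le_mul_of_nonneg_left e2 hL.le
      have e4 := mul_le_mul_of_nonneg_left hsum2
        (by exact_mod_cast Nat.zero_le M : (0:ℝ) ≤ (M:ℝ))
      linarith only [e3, e4]
    set W := L * D * ‖x t 0 - y‖ with hWdef
    have hW0 : 0 ≤ W := by positivity
    have hW2 : W ^ 2 ≤ 2 * ((M:ℝ) * L * D ^ 2) * (f (x t 0) - f y) := by
      have e4 : L * D ^ 2 * (L * ‖x t 0 - y‖ ^ 2)
          ≤ L * D ^ 2 * ((M:ℝ) * (2 * (f (x t 0) - f y))) :=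
        mul_le_mul_of_nonneg_left hmv (by positivity)
      calc W ^ 2 = L * D ^ 2 * (L * ‖x t 0 - y‖ ^ 2) := by rw [hWdef]; ring
        _ ≤ L * D ^ 2 * ((M:ℝ) * (2 * (f (x t 0) - f y))) := e4
        _ = 2 * ((M:ℝ) * L * D ^ 2) * (f (x t 0) - f y) := by ring
    -- inner product decomposition at step i
    have hdecomp : ⟪g y, v i - y⟫
        = ⟪g (x t 0), v i - x t 0⟫ + ⟪g y - g (x t 0), v i - x t 0⟫
          + ⟪g y, x t 0 - y⟫ := by
      simp only [inner_sub_left, inner_sub_right]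
      ring
    have hb1 : ⟪g y - g (x t 0), v i - x t 0⟫ ≤ W := by
      calc ⟪g y - g (x t 0), v i - x t 0⟫ ≤ ‖g y - g (x t 0)‖ * ‖v i - x t 0‖ :=
            real_inner_le_norm _ _
        _ ≤ (L * ‖y - x t 0‖) * D := by
            apply mul_le_mul (hlip y hyS (x t 0) hx0S) (hD _ (hvS i hi1 hiM) _ hx0S)
              (norm_nonneg _) (by positivity)
        _ = W := by rw [hWdef, norm_sub_rev]; ring
    have hb2 : ⟪g y, x t 0 - y⟫ ≤ f (x t 0) - f y :=
      convex_grad_le' hconv hyS hx0S (hgrad _ hyS)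
    have hb3 : ⟪g (x t 0), v i - x t 0⟫ ≤ -(f (x t 0) - f xstar) := by
      have hflip : ⟪g (x t 0), v i - x t 0⟫ = - ⟪g (x t 0), x t 0 - v i⟫ := by
        rw [show v i - x t 0 = -(x t 0 - v i) by abel, inner_neg_right]
      linarith only [hflip.le, hflip.ge, hgood]
    have hc : ⟪g y, v i - y⟫ ≤ -(f (x t 0) - f xstar) + W + (f (x t 0) - f y) := by
      rw [hdecomp]; linarith only [hb1, hb2, hb3]
    -- now the contradiction argument
    by_contra hcon
    push_neg at hcon
    clear_value W
    set h' := f (x t M) - f xstar with hh'def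
    set Δpre := f (x t 0) - f y with hΔpredef
    set Δpost := f y - f (x t M) with hΔpostdef
    clear_value h' Δpre Δpost
    have hid2 : f (x t 0) - f (x t M) = Δpre + Δpost := by
      rw [hΔpredef, hΔpostdef]; ring
    rw [hid2] at hcon
    have hidA : f (x t 0) - f xstar = h' + Δpre + Δpost := by
      rw [hh'def, hΔpredef, hΔpostdef]; ring
    have hM1 : (1:ℝ) ≤ (M:ℝ) := by exact_mod_cast hM
    -- W < h'/2
    have hWlt : W < h' / 2 := by
      have k1 : W ^ 2 ≤ 2 * ((M:ℝ) * L * D ^ 2) * (Δpre + Δpost) := by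
        have k0 := mul_le_mul_of_nonneg_left
          (by linarith only [hΔpost0] : Δpre ≤ Δpre + Δpost)
          (by positivity : (0:ℝ) ≤ 2 * ((M:ℝ) * L * D ^ 2))
        linarith only [hW2, k0]
      have k2 : (2*W) ^ 2 < h' ^ 2 := by
        have : (2*W)^2 = 4 * W^2 := by ring
        linarith only [k1, hcon, this]
      by_contra hW'
      push_neg at hW'
      have : h' ^ 2 ≤ (2*W) ^ 2 := pow_le_pow_left₀ hpos.le (by linarith only [hW']) 2
      linarith only [k2, this]
    -- lower bound on -c
    have hcneg : h' / 2 + Δpost < - ⟪g y, v i - y⟫ := by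
      linarith only [hc, hWlt, hidA]
    set P := L * D ^ 2 with hPdef
    have hPpos : 0 < P := by rw [hPdef]; positivity
    clear_value P
    set q := h' / 2 + Δpost with hqdef
    clear_value q
    have hq0 : 0 < q := by rw [hqdef]; linarith only [hpos, hΔpost0]
    rcases le_or_gt q P with hcase | hcase
    · -- quadratic regime
      set β := q / P with hβdef
      clear_value β
      have hβ0 : 0 ≤ β := by rw [hβdef]; exact le_of_lt (div_pos hq0 hPpos)
      have hβ1 : β ≤ 1 := by rw [hβdef, div_le_one hPpos]; exact hcase
      have hstep2 := (step t i hi1 hiM).2 β ⟨hβ0, hβ1⟩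
      have hqP : β * P = q := by rw [hβdef]; exact div_mul_cancel₀ _ hPpos.ne'
      have hbq : β * q = P * β ^ 2 := by rw [← hqP]; ring
      have hβc : β * ⟪g y, v i - y⟫ ≤ -(P * β ^ 2) := by
        have hmm := mul_le_mul_of_nonneg_left hcneg.le hβ0
        linarith only [hmm, hbq]
      have hPid : L * β ^ 2 / 2 * D ^ 2 = P / 2 * β ^ 2 := by rw [hPdef]; ring
      have hZ : f (x t M) ≤ f y - P / 2 * β ^ 2 := by
        rw [hPid] at hstep2
        linarith only [hstep2, hfzfi, hβc]
      have hq2 : q ^ 2 = P ^ 2 * β ^ 2 := by rw [← hqP]; ring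
      have hh'q : h' ^ 2 ≤ 4 * q ^ 2 := by
        rw [hqdef]
        linarith only [sq_nonneg Δpost, mul_nonneg hpos.le hΔpost0]
      have e5 : P / 2 * β ^ 2 ≤ Δpost := by
        linarith only [hZ, hΔpostdef]
      have c8 : (0:ℝ) ≤ 8 * ((M:ℝ) * P) := by positivity
      have s1 := mul_le_mul_of_nonneg_left e5 c8
      have s2 := mul_le_mul_of_nonneg_left
        (by linarith only [hΔpre0] : Δpost ≤ Δpre + Δpost) c8
      have s3 : 4 * P ^ 2 * β ^ 2 ≤ 4 * (M:ℝ) * (P ^ 2 * β ^ 2) := by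
        have hfac := mul_nonneg (by linarith only [hM1] : (0:ℝ) ≤ (M:ℝ) - 1)
          (by positivity : (0:ℝ) ≤ 4 * (P ^ 2 * β ^ 2))
        linarith only [hfac]
      have hfin : h' ^ 2 ≤ 8 * (M:ℝ) * L * D ^ 2 * (Δpre + Δpost) := by
        have hPexp : 8 * (M:ℝ) * L * D ^ 2 * (Δpre + Δpost)
            = 8 * ((M:ℝ) * P) * (Δpre + Δpost) := by rw [hPdef]; ring
        rw [hPexp]
        linarith only [s1, s2, s3, hq2, hh'q]
      linarith only [hfin, hcon]
    · -- linear regime : β = 1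
      have hstep2 := (step t i hi1 hiM).2 1 ⟨zero_le_one, le_refl 1⟩
      have hPid : L * 1 ^ 2 / 2 * D ^ 2 = P / 2 := by rw [hPdef]; ring
      have hZ : f (x t M) < f y - q + P / 2 := by
        rw [hPid] at hstep2
        linarith only [hstep2, hfzfi, hcneg]
      have hΔZ : q - P / 2 < Δpost := by
        linarith only [hZ, hΔpostdef]
      have hPh : h' < P := by
        rw [hqdef] at hΔZ; linarith only [hΔZ]
      have hΔbig : h' / 2 < Δpost := by
        rw [hqdef] at hcase; linarith only [hcase, hPh]
      have c8 : (0:ℝ) < 8 * ((M:ℝ) * P) := by positivity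
      have s1 := mul_lt_mul_of_pos_left hΔbig c8
      have s2 := mul_le_mul_of_nonneg_left
        (by linarith only [hΔpre0] : Δpost ≤ Δpre + Δpost) c8.le
      have s3 : 4 * h' * h' < 4 * P * h' := by
        have := mul_lt_mul_of_pos_left hPh (by linarith only [hpos] : (0:ℝ) < 4 * h')
        linarith only [this]
      have s4 : 4 * P * h' ≤ 4 * ((M:ℝ) * P) * h' := by
        have hfac := mul_nonneg (by linarith only [hM1] : (0:ℝ) ≤ (M:ℝ) - 1)
          (by positivity : (0:ℝ) ≤ 4 * (P * h'))
        have hPh' := mul_nonneg hPpos.le hpos.le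
        linarith only [hfac, hPh']
      have hfin : h' ^ 2 < 8 * (M:ℝ) * L * D ^ 2 * (Δpre + Δpost) := by
        have hPexp : 8 * (M:ℝ) * L * D ^ 2 * (Δpre + Δpost)
            = 8 * ((M:ℝ) * P) * (Δpre + Δpost) := by rw [hPdef]; ring
        rw [hPexp]
        linarith only [s1, s2, s3, s4, sq_nonneg h']
      linarith only [hfin, hcon]
  -- final induction
  intro t ht
  induction t, ht using Nat.le_induction with
  | base =>
    rw [Nat.cast_one, div_one]
    exact le_max_left _ _
  | succ t ht ih =>
    set C := max (f (x 1 0) - f xstar) (16 * M * L * D ^ 2) with hCdef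
    have hC16 : 16 * (M:ℝ) * L * D ^ 2 ≤ C := le_max_right _ _
    clear_value C
    have hC0 : 0 ≤ C := le_trans (by positivity) hC16
    have hT1 : (1:ℝ) ≤ (t:ℝ) := by exact_mod_cast ht
    have hTpos : (0:ℝ) < (t:ℝ) := by linarith only [hT1]
    have hT1pos : (0:ℝ) < (t:ℝ) + 1 := by linarith only [hT1]
    have hcyc := cycle t
    rw [← hcycle t] at hcyc
    have hmono : f (x (t+1) 0) ≤ f (x t 0) := by
      have h := chainA t 0 M (by omega) le_rfl
      rw [← hcycle t] at h
      linarith only [h, hsumnn t 0 M]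
    have hnext0 : 0 ≤ f (x (t+1) 0) - f xstar := sub_nonneg.2 (hmin _ (hx0 (t+1)))
    by_contra hcon
    push_neg at hcon
    have hcast : ((t+1 : ℕ) : ℝ) = (t:ℝ) + 1 := by push_cast; ring
    rw [hcast] at hcon
    have hcon' : C < (f (x (t+1) 0) - f xstar) * ((t:ℝ) + 1) := by
      rw [div_lt_iff₀ hT1pos] at hcon
      linarith only [hcon]
    have hih' : (f (x t 0) - f xstar) * (t:ℝ) ≤ C := by
      rw [← le_div_iff₀ hTpos]
      exact ih
    set h' := f (x (t+1) 0) - f xstar with hh'def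
    set hp := f (x t 0) - f xstar with hhpdef
    clear_value h' hp
    have hid : f (x t 0) - f (x (t+1) 0) = hp - h' := by
      rw [hh'def, hhpdef]; ring
    rw [hid] at hcyc
    have hmono' : h' ≤ hp := by rw [hh'def, hhpdef]; linarith only [hmono]
    have hq : 2 * h' ^ 2 ≤ C * (hp - h') := by
      have k2 := mul_le_mul_of_nonneg_right hC16
        (by linarith only [hmono'] : (0:ℝ) ≤ hp - h')
      linarith only [hcyc, k2]
    have hppos : 0 < h' := by
      rcases le_or_gt h' 0 with hh | hh
      · exfalso
        have hneg : h' * ((t:ℝ) + 1) ≤ 0 :=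
          mul_nonpos_of_nonpos_of_nonneg hh (by linarith only [hT1])
        linarith only [hcon', hneg, hC0]
      · exact hh
    have k3 : (t:ℝ) * (C * h' + 2 * h' ^ 2) ≤ C * C := by
      have m1 := mul_le_mul_of_nonneg_left hih' hC0
      have m2 := mul_le_mul_of_nonneg_left
        (by linarith only [hq] : C * h' + 2 * h' ^ 2 ≤ C * hp) hTpos.le
      linarith only [m1, m2]
    have k4 : C * C < C * (h' * ((t:ℝ) + 1)) := by
      rcases eq_or_lt_of_le hC0 with hCz | hCpos
      · exfalso
        have hhp : 0 < hp := lt_of_lt_of_le hppos hmono'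
        have hpt : 0 < hp * (t:ℝ) := mul_pos hhp hTpos
        rw [← hCz] at hih'
        linarith only [hih', hpt]
      · exact mul_lt_mul_of_pos_left hcon' hCpos
    have m3 := mul_lt_mul_of_pos_right hcon' hppos
    have m4 := mul_nonneg (sq_nonneg h') (by linarith only [hT1] : (0:ℝ) ≤ (t:ℝ) - 1)
    linarith only [k3, k4, m3, m4]
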